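/- Let G be a finite simple graph, k ≥ 1, M a k-limited spanning subgraph of G, and P an M-augmenting trail with endpoints u and w, and let M' be the spanning subgraph of G whose edge set is the symmetric difference E(M) Δ E(P). If u ≠ w, then deg_{M'}(u) = deg_M(u) + 1, deg_{M'}(w) = deg_M(w) + 1, and deg_{M'}(v) = deg_M(v) for every vertex v ∉ {u, w}; if u = w, then deg_{M'}(u) = deg_M(u) + 2 and deg_{M'}(v) = deg_M(v) for every vertex v ≠ u. -/

import Mathlib

open SimpleGraph

variable {V : Type*}

/-- The degree of a vertex `v` in a (sub)graph `M`. -/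
noncomputable def mdeg (M : SimpleGraph V) (v : V) : ℕ := (M.neighborSet v).ncard

/-- `M` is a `k`-limited spanning subgraph of `G`: a subgraph on all the vertices of `G`
with all degrees at most `k`. -/
def IsKLimitedSpanning (G M : SimpleGraph V) (k : ℕ) : Prop :=
  M ≤ G ∧ ∀ v : V, mdeg M v ≤ k

/-- `F` is a `k`-factor of `G`: a spanning subgraph all of whose degrees equal `k`. -/
def IsKFactor (G F : SimpleGraph V) (k : ℕ) : Prop :=
  F ≤ G ∧ ∀ v : V, mdeg F v = k

/-- The deficiency `σ(M) = ∑_{v} (k - deg_M v)`. -/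
noncomputable def sigmaDef [Fintype V] (M : SimpleGraph V) (k : ℕ) : ℕ :=
  ∑ v : V, (k - mdeg M v)

/-- An `M`-alternating trail: a trail whose consecutive edges alternate between
membership and non-membership in `E(M)`. -/
def IsAltTrail {G : SimpleGraph V} (M : SimpleGraph V) {u v : V} (p : G.Walk u v) : Prop :=
  p.IsTrail ∧ ∀ (i : ℕ) (h : i + 1 < p.edges.length),
    ((p.edges[i]'(Nat.lt_of_succ_lt h)) ∈ M.edgeSet ↔ (p.edges[i+1]'h) ∉ M.edgeSet)

/-- An `M`-augmenting trail (with respect to the bound `k`): an `M`-alternating trail whose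
first and last edges are not in `E(M)`, whose endpoints are unfilled in `M`, all of whose
inner vertex visits are filled in `M`, and which, if closed at `v₀ = u = v`, additionally
satisfies `deg_M v₀ < k - 1`. -/
def IsAugTrail (G M : SimpleGraph V) (k : ℕ) {u v : V} (p : G.Walk u v) : Prop :=
  IsAltTrail M p ∧
  p.edges ≠ [] ∧
  (∀ e, p.edges.head? = some e → e ∉ M.edgeSet) ∧
  (∀ e, p.edges.getLast? = some e → e ∉ M.edgeSet) ∧
  mdeg M u < k ∧ mdeg M v < k ∧
  (∀ w ∈ p.support.tail.dropLast, mdeg M w = k) ∧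
  (u = v → mdeg M u < k - 1)


section AuxLemmas
open scoped Classical

lemma ncard_fiber (x : V) (l : List (Sym2 V)) (hl : l.Nodup) (pr : Sym2 V → Prop) :
    ({y | s(x,y) ∈ l ∧ pr s(x,y)} : Set V).ncard
      = l.countP (fun e => decide (x ∈ e ∧ pr e)) := by
  have hinj : Function.Injective (fun y : V => s(x,y)) := fun a b h => Sym2.congr_right.mp h
  rw [← Set.ncard_image_of_injective _ hinj]
  have himg : (fun y : V => s(x,y)) '' {y | s(x,y) ∈ l ∧ pr s(x,y)}
      = ↑(l.toFinset.filter (fun e => x ∈ e ∧ pr e)) := by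
    ext e
    simp only [Set.mem_image, Finset.coe_filter, Set.mem_setOf_eq, List.mem_toFinset]
    constructor
    · rintro ⟨y, ⟨h1, h2⟩, rfl⟩
      exact ⟨h1, Sym2.mem_mk_left x y, h2⟩
    · rintro ⟨h1, h2, h3⟩
      obtain ⟨y, rfl⟩ := Sym2.mem_iff_exists.mp h2
      exact ⟨y, ⟨h1, h3⟩, rfl⟩
  rw [himg, Set.ncard_coe_finset]
  have h2 : (l.toFinset.filter (fun e => x ∈ e ∧ pr e))
      = (l.filter (fun e => decide (x ∈ e ∧ pr e))).toFinset := by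
    ext e
    simp [List.mem_filter]
  rw [h2, List.card_toFinset, (hl.filter _).dedup, List.countP_eq_length_filter.symm]

lemma mdeg_fromEdgeSet_symmDiff [Fintype V] (G M : SimpleGraph V) {u w : V}
    (p : G.Walk u w) (hp : p.IsTrail) (x : V) :
    (mdeg (SimpleGraph.fromEdgeSet (symmDiff M.edgeSet {e | e ∈ p.edges})) x : ℤ)
      = (mdeg M x : ℤ)
        + (p.edges.countP (fun e => decide (x ∈ e ∧ e ∉ M.edgeSet)) : ℤ)
        - (p.edges.countP (fun e => decide (x ∈ e ∧ e ∈ M.edgeSet)) : ℤ) := by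
  classical
  set A := M.neighborSet x with hA
  set B := {y | s(x,y) ∈ p.edges} with hB
  have hN : (SimpleGraph.fromEdgeSet (symmDiff M.edgeSet {e | e ∈ p.edges})).neighborSet x
      = (A \ B) ∪ (B \ A) := by
    ext y
    simp only [mem_neighborSet, fromEdgeSet_adj, Set.mem_symmDiff, Set.mem_setOf_eq,
      Set.mem_union, Set.mem_diff, hA, hB, Set.mem_setOf_eq, mem_neighborSet, ← mem_edgeSet]
    constructor
    · rintro ⟨(⟨h1, h2⟩ | ⟨h1, h2⟩), hne⟩
      · exact Or.inl ⟨h1, h2⟩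
      · exact Or.inr ⟨h1, h2⟩
    · rintro (⟨h1, h2⟩ | ⟨h1, h2⟩)
      · exact ⟨Or.inl ⟨h1, h2⟩, (M.ne_of_adj (M.mem_edgeSet.mp h1))⟩
      · exact ⟨Or.inr ⟨h1, h2⟩,
          (G.ne_of_adj (G.mem_edgeSet.mp (p.edges_subset_edgeSet h1)))⟩
  have hdisj : Disjoint (A \ B) (B \ A) := disjoint_sdiff_sdiff
  have hcard : mdeg (SimpleGraph.fromEdgeSet (symmDiff M.edgeSet {e | e ∈ p.edges})) x
      = (A \ B).ncard + (B \ A).ncard := by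
    rw [mdeg, hN, Set.ncard_union_eq hdisj (Set.toFinite _) (Set.toFinite _)]
  have hBA : (B \ A).ncard = p.edges.countP (fun e => decide (x ∈ e ∧ e ∉ M.edgeSet)) := by
    have : B \ A = {y | s(x,y) ∈ p.edges ∧ s(x,y) ∉ M.edgeSet} := by
      ext y
      simp [hA, hB, mem_edgeSet]
    rw [this, ncard_fiber x p.edges hp.edges_nodup (fun e => e ∉ M.edgeSet)]; apply List.countP_congr; intro e _; simp
  have hAB : (A ∩ B).ncard = p.edges.countP (fun e => decide (x ∈ e ∧ e ∈ M.edgeSet)) := by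
    have : A ∩ B = {y | s(x,y) ∈ p.edges ∧ s(x,y) ∈ M.edgeSet} := by
      ext y
      simp [hA, hB, mem_edgeSet, and_comm]
    rw [this, ncard_fiber x p.edges hp.edges_nodup (fun e => e ∈ M.edgeSet)]; apply List.countP_congr; intro e _; simp
  have hle : (A ∩ B).ncard ≤ A.ncard := Set.ncard_le_ncard Set.inter_subset_left A.toFinite
  have hAmB : (A \ B).ncard = A.ncard - (A ∩ B).ncard := by
    rw [← Set.diff_self_inter, Set.ncard_diff Set.inter_subset_left (Set.toFinite _)]
  have : mdeg M x = A.ncard := rfl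
  rw [hcard]
  push_cast [hAmB, hBA.symm, hAB.symm, this]
  omega

lemma alt_count {G : SimpleGraph V} (M : SimpleGraph V) {u w : V} (p : G.Walk u w)
    (halt : ∀ (i : ℕ) (h : i + 1 < p.edges.length),
      ((p.edges[i]'(Nat.lt_of_succ_lt h)) ∈ M.edgeSet ↔ (p.edges[i+1]'h) ∉ M.edgeSet))
    (e0 : Sym2 V) (he0 : p.edges.head? = some e0)
    (hlast : ∀ el, p.edges.getLast? = some el → el ∉ M.edgeSet) (x : V) :
    (p.edges.countP (fun e => decide (x ∈ e ∧ e ∉ M.edgeSet)) : ℤ)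
      - (p.edges.countP (fun e => decide (x ∈ e ∧ e ∈ M.edgeSet)) : ℤ)
    = (if e0 ∈ M.edgeSet then -1 else 1) * (if x = u then 1 else 0)
      + (if x = w then 1 else 0) := by
  induction p generalizing e0 with
  | nil => simp at he0
  | @cons u v w h q ih =>
    rw [Walk.edges_cons, List.head?_cons, Option.some.injEq] at he0
    subst he0
    by_cases hq : q.edges = []
    · have hvw : v = w := Walk.eq_of_length_eq_zero (by rw [← Walk.length_edges, hq]; rfl)
      subst hvw
      have hlast' : s(u,v) ∉ M.edgeSet := hlast _ (by simp [Walk.edges_cons, hq])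
      have hne : u ≠ v := h.ne
      rw [Walk.edges_cons, hq]
      by_cases hxu : x = u <;> by_cases hxv : x = v <;>
        simp [List.countP_cons, hxu, hxv, Sym2.mem_iff, hlast', hne, Ne.symm hne] <;> omega
    · obtain ⟨e1, t, hqe⟩ := List.exists_cons_of_ne_nil hq
      have halt' : ∀ (i : ℕ) (hi : i + 1 < q.edges.length),
          ((q.edges[i]'(Nat.lt_of_succ_lt hi)) ∈ M.edgeSet ↔ (q.edges[i+1]'hi) ∉ M.edgeSet) := by
        intro i hi
        have hi2 : (i+1) + 1 < (Walk.cons h q).edges.length := by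
          rw [Walk.edges_cons, List.length_cons]; omega
        have := halt (i+1) hi2
        simpa [Walk.edges_cons] using this
      have h0 : (s(u,v) ∈ M.edgeSet ↔ e1 ∉ M.edgeSet) := by
        have hi2 : 0 + 1 < (Walk.cons h q).edges.length := by
          rw [Walk.edges_cons, List.length_cons, hqe, List.length_cons]; omega
        have := halt 0 hi2
        simpa [Walk.edges_cons, hqe] using this
      have hlast' : ∀ el, q.edges.getLast? = some el → el ∉ M.edgeSet := by
        intro el hel
        apply hlast
        rw [Walk.edges_cons, hqe, List.getLast?_cons_cons]
        rwa [hqe] at hel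
      have dq := ih halt' e1 (by rw [hqe]; rfl) hlast'
      rw [hqe] at dq
      have hne : u ≠ v := h.ne
      clear halt hlast halt' hlast' ih hq
      rw [Walk.edges_cons, hqe]
      have key : (if x = u ∨ x = v then (1:ℤ) else 0)
          = (if x = u then 1 else 0) + (if x = v then 1 else 0) := by
        by_cases hxu : x = u
        · subst hxu; simp [hne]
        · simp [hxu]
      rw [@List.countP_cons _ (fun e => decide (x ∈ e ∧ e ∉ M.edgeSet)) s(u,v) (e1::t),
        @List.countP_cons _ (fun e => decide (x ∈ e ∧ e ∈ M.edgeSet)) s(u,v) (e1::t)]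
      simp only [decide_eq_true_eq]
      by_cases hm : s(u,v) ∈ M.edgeSet
      · have he1 : e1 ∉ M.edgeSet := h0.mp hm
        simp only [hm, he1, not_true, not_false_iff, and_true, and_false, if_true,
          if_false, ite_true, ite_false, add_zero, one_mul, Sym2.mem_iff] at dq ⊢
        push_cast at dq ⊢
        rw [key]
        linarith [dq]
      · have he1 : e1 ∈ M.edgeSet := by by_contra hc; exact hm (h0.mpr hc)
        simp only [hm, he1, not_true, not_false_iff, and_true, and_false, if_true,
          if_false, ite_true, ite_false, add_zero, one_mul, Sym2.mem_iff,
          not_false_eq_true, eq_self_iff_true] at dq ⊢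
        push_cast at dq ⊢
        rw [key]
        linarith [dq]

end AuxLemmas

/-- Degrees in `M' = M Δ P` for an `M`-augmenting trail `P` with endpoints
`u` and `w`: both endpoint degrees increase by one (by two if `u = w`), and all other
degrees are unchanged. -/
theorem symmDiff_degrees [Fintype V] (G M M' : SimpleGraph V) (k : ℕ) (hk : 1 ≤ k)
    (hM : IsKLimitedSpanning G M k) {u w : V} (p : G.Walk u w)
    (hP : IsAugTrail G M k p)
    (hM' : M' = SimpleGraph.fromEdgeSet (symmDiff M.edgeSet {e | e ∈ p.edges})) :
    (u ≠ w →
      mdeg M' u = mdeg M u + 1 ∧ mdeg M' w = mdeg M w + 1 ∧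
        ∀ x : V, x ≠ u → x ≠ w → mdeg M' x = mdeg M x) ∧
    (u = w →
      mdeg M' u = mdeg M u + 2 ∧ ∀ x : V, x ≠ u → mdeg M' x = mdeg M x) := by
  classical
  obtain ⟨⟨htrail, halt⟩, hne_nil, hhead, hlastM, _, _, _, _⟩ := hP
  obtain ⟨e0, t, hpe⟩ := List.exists_cons_of_ne_nil hne_nil
  have he0M : e0 ∉ M.edgeSet := hhead e0 (by rw [hpe]; rfl)
  have hcount := alt_count M p halt e0 (by rw [hpe]; rfl) hlastM
  have hdeg := mdeg_fromEdgeSet_symmDiff G M p htrail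
  have main : ∀ x : V, (mdeg M' x : ℤ)
      = (mdeg M x : ℤ) + ((if x = u then 1 else 0) + (if x = w then 1 else 0)) := by
    intro x
    have h1 := hdeg x
    have h2 := hcount x
    rw [if_neg he0M, one_mul] at h2
    rw [hM']
    linarith [h1, h2]
  constructor
  · intro huw
    refine ⟨?_, ?_, ?_⟩
    · have := main u
      simp [huw] at this
      omega
    · have := main w
      simp [Ne.symm huw] at this
      omega
    · intro x hxu hxw
      have := main x
      simp [hxu, hxw] at this
      omega
  · intro huw
    subst huw
    refine ⟨?_, ?_⟩
    · have := main u
      simp at this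
      omega
    · intro x hxu
      have := main x
      simp [hxu] at this
      omega
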